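/- For each 1 ≤ k ≤ n, the process X_{k,1}, X_{k,2}, …, X_{k,mn+1} is a supermartingale: for each 1 ≤ t ≤ mn, almost surely E(X_{k,t+1} | g_1,…,g_t, z_1,…,z_{t−1}) ≤ X_{k,t}. -/

import Mathlib

open MeasureTheory ProbabilityTheory Finset

/-- `cntA g k t ω` is `a(k,t)`: the number of rounds `1 ≤ i < t` in which label `k` was
guessed. -/
def cntA {Ω : Type*} (g : ℕ → Ω → ℕ) (k t : ℕ) (ω : Ω) : ℕ :=
  ((Finset.Ico 1 t).filter fun i => g i ω = k).card

/-- `cntB g z k t ω` is `c(k,t)`: the number of rounds `1 ≤ i < t` in which label `k` was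
guessed and `z i = 1`. -/
def cntB {Ω : Type*} (g z : ℕ → Ω → ℕ) (k t : ℕ) (ω : Ω) : ℕ :=
  ((Finset.Ico 1 t).filter fun i => g i ω = k ∧ z i ω = 1).card

/-- `Y := ⌊(√m)·n/6⌋`. -/
noncomputable def Yval (m n : ℕ) : ℕ := ⌊Real.sqrt m * n / 6⌋₊

/-- A deck `d` (read on positions `1,…,m*n`) is valid if every value lies in `{1,…,n}` and
every label `k ∈ {1,…,n}` appears exactly `m` times. -/
def ValidDeck (m n : ℕ) (d : ℕ → ℕ) : Prop :=
  (∀ t ∈ Finset.Icc 1 (m * n), d t ∈ Finset.Icc 1 n) ∧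
    ∀ k ∈ Finset.Icc 1 n, ((Finset.Icc 1 (m * n)).filter fun t => d t = k).card = m

/-- The σ-algebra generated by `u_1,…,u_s` and `v_1,…,v_r`. -/
def hist2 {Ω : Type*} (u v : ℕ → Ω → ℕ) (s r : ℕ) : MeasurableSpace Ω :=
  MeasurableSpace.comap
    (fun ω => ((fun i : Fin s => u (i.1 + 1) ω), (fun i : Fin r => v (i.1 + 1) ω)))
    inferInstance

/-- The function `f(x) = x²` for `x ≤ 0`, `f(x) = 0` for `0 < x < c`, and `f(x) = (x − c)²`
for `x ≥ c`. -/
noncomputable def fFun (c x : ℝ) : ℝ :=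
  if x ≤ 0 then x ^ 2 else if x < c then 0 else (x - c) ^ 2

/-- `X_{k,t} := f(c(k,t) − a(k,t)/n) − 3·c(k,t) − 3·a(k,t)/n` with `f` taken at threshold
`c := Y/n`. -/
noncomputable def Xproc {Ω : Type*} (m n : ℕ) (g z : ℕ → Ω → ℕ) (k t : ℕ) (ω : Ω) : ℝ :=
  fFun ((Yval m n : ℝ) / n) ((cntB g z k t ω : ℝ) - (cntA g k t ω : ℝ) / n)
    - 3 * (cntB g z k t ω : ℝ) - 3 * (cntA g k t ω : ℝ) / n

/-! ### Auxiliary analytic lemmas about `fFun` -/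

/-- The signed distance to the interval `[0, b]`. -/
noncomputable def Hh (b x : ℝ) : ℝ := max (x - b) 0 + min x 0

lemma fFun_eq_sq {b : ℝ} (hb : 0 ≤ b) (x : ℝ) : fFun b x = (Hh b x) ^ 2 := by
  unfold fFun Hh
  rcases le_or_gt x 0 with h | h
  · rw [if_pos h, max_eq_right (by linarith), min_eq_left h]; ring
  · rw [if_neg (not_le.mpr h), min_eq_right h.le]
    by_cases h2 : x < b
    · rw [if_pos h2, max_eq_right (by linarith)]; ring
    · rw [if_neg h2, max_eq_left (by push_neg at h2; linarith)]; ring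

lemma Hh_le {b : ℝ} (hb : 0 ≤ b) (x : ℝ) : Hh b x ≤ x := by
  unfold Hh
  rcases le_or_gt x 0 with h | h
  · rw [max_eq_right (by linarith), min_eq_left h]; linarith
  · rw [min_eq_right h.le]
    rcases le_or_gt (x - b) 0 with h2 | h2
    · rw [max_eq_right h2]; linarith
    · rw [max_eq_left h2.le]; linarith

lemma le_Hh {b : ℝ} (hb : 0 ≤ b) (x : ℝ) : x - b ≤ Hh b x := by
  unfold Hh
  rcases le_or_gt x 0 with h | h
  · rw [max_eq_right (by linarith), min_eq_left h]; linarith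
  · rw [min_eq_right h.le]
    rcases le_or_gt (x - b) 0 with h2 | h2
    · rw [max_eq_right h2]; linarith
    · rw [max_eq_left h2.le]; linarith

lemma Hh_of_pos {b x : ℝ} (hb : 0 ≤ b) (h : 0 < Hh b x) : Hh b x = x - b := by
  unfold Hh at *
  rcases le_or_gt x 0 with h1 | h1
  · rw [max_eq_right (by linarith), min_eq_left h1] at h ⊢; linarith
  · rw [min_eq_right h1.le] at h ⊢
    rcases le_or_gt (x - b) 0 with h2 | h2
    · rw [max_eq_right h2] at h; linarith
    · rw [max_eq_left h2.le]; ring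

lemma Hh_of_neg {b x : ℝ} (hb : 0 ≤ b) (h : Hh b x < 0) : Hh b x = x := by
  unfold Hh at *
  rcases le_or_gt x 0 with h1 | h1
  · rw [max_eq_right (by linarith), min_eq_left h1] at h ⊢; ring
  · rw [min_eq_right h1.le] at h ⊢
    rcases le_or_gt (x - b) 0 with h2 | h2
    · rw [max_eq_right h2] at h; linarith
    · rw [max_eq_left h2.le] at h; linarith

lemma Hh_sign {b : ℝ} (hb : 0 ≤ b) (x : ℝ) : 0 ≤ Hh b x * (x - b) := by
  unfold Hh
  rcases le_or_gt x 0 with h | h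
  · rw [max_eq_right (by linarith), min_eq_left h]; nlinarith
  · rw [min_eq_right h.le]
    rcases le_or_gt (x - b) 0 with h2 | h2
    · rw [max_eq_right h2]; nlinarith
    · rw [max_eq_left h2.le]; nlinarith

lemma Hsq {b : ℝ} (hb : 0 ≤ b) (x δ : ℝ) : fFun b (x + δ) ≤ (Hh b x + δ) ^ 2 := by
  rw [fFun_eq_sq hb]
  rcases lt_trichotomy (Hh b (x + δ)) 0 with h | h | h
  · have h1 : Hh b (x + δ) = x + δ := Hh_of_neg hb h
    have h2 : Hh b x ≤ x := Hh_le hb x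
    nlinarith
  · rw [h]; simpa using sq_nonneg (Hh b x + δ)
  · have h1 : Hh b (x + δ) = x + δ - b := Hh_of_pos hb h
    have h2 : x - b ≤ Hh b x := le_Hh hb x
    nlinarith

lemma fFun_nonneg {b : ℝ} (x : ℝ) : 0 ≤ fFun b x := by
  unfold fFun; split_ifs <;> positivity

lemma fFun_small {b ninv y : ℝ} (h1 : -ninv ≤ y) (h2 : y < b) : fFun b y ≤ ninv ^ 2 := by
  unfold fFun
  rcases le_or_gt y 0 with h3 | h3
  · rw [if_pos h3]; nlinarith
  · rw [if_neg (not_le.mpr h3), if_pos h2]; positivity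

lemma fFun_le {b : ℝ} (hb : 0 ≤ b) (x : ℝ) : fFun b x ≤ (|x| + b) ^ 2 := by
  unfold fFun
  rcases abs_cases x with ⟨he, _⟩ | ⟨he, _⟩ <;> split_ifs <;> nlinarith

lemma fFun_abs_le {b x R : ℝ} (hb : 0 ≤ b) (hx : |x| ≤ R) : fFun b x ≤ (R + b) ^ 2 :=
  le_trans (fFun_le hb x) (by nlinarith [abs_nonneg x])

/-- The core one-step inequality. -/
lemma core_ineq {b q p x ninv : ℝ} (hb : 0 ≤ b) (hq : 0 < q) (hninv : 0 < ninv)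
    (hninv1 : ninv ≤ 1) (hp0 : 0 ≤ p) (hp1 : p ≤ 1)
    (hrel : p - ninv = (b - x) / q) :
    p * fFun b (x + (1 - ninv)) + (1 - p) * fFun b (x + (-ninv))
      ≤ fFun b x + 3 * p + 3 * ninv := by
  have h1 := Hsq hb x (1 - ninv)
  have h0 := Hsq hb x (-ninv)
  rw [fFun_eq_sq hb x]
  set H := Hh b x with hH
  have hsign : 0 ≤ H * (x - b) := Hh_sign hb x
  have hqrel : q * (p - ninv) = b - x := by
    rw [hrel]; field_simp
  have h2 : H * (p - ninv) ≤ 0 := by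
    have h3 : q * (H * (p - ninv)) ≤ 0 := by nlinarith
    nlinarith
  have e1 : p * fFun b (x + (1 - ninv)) ≤ p * (H + (1 - ninv)) ^ 2 :=
    mul_le_mul_of_nonneg_left h1 hp0
  have e0 : (1 - p) * fFun b (x + (-ninv)) ≤ (1 - p) * (H + (-ninv)) ^ 2 :=
    mul_le_mul_of_nonneg_left h0 (by linarith)
  nlinarith [h2, e1, e0, sq_nonneg ninv,
    mul_nonneg hp0 (mul_nonneg hninv.le (sub_nonneg.mpr hninv1)),
    mul_nonneg hp0 (sub_nonneg.mpr hninv1),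
    mul_nonneg hninv.le (sub_nonneg.mpr hninv1),
    mul_nonneg hp0 (sq_nonneg ninv)]

/-! ### Measurability with respect to the history σ-algebra -/

section meas
variable {Ω : Type*} (u v : ℕ → Ω → ℕ) (s r : ℕ)

lemma measurable_hist2_proj :
    @Measurable Ω _ (hist2 u v s r) _
      (fun ω => ((fun i : Fin s => u (i.1 + 1) ω), (fun i : Fin r => v (i.1 + 1) ω))) :=
  fun _ hs => ⟨_, hs, rfl⟩

lemma measurable_u_hist {i : ℕ} (h1 : 1 ≤ i) (h2 : i ≤ s) :
    @Measurable Ω _ (hist2 u v s r) _ (u i) := by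
  have hlt : i - 1 < s := by omega
  have heq : u i = (fun p : (Fin s → ℕ) × (Fin r → ℕ) => p.1 ⟨i - 1, hlt⟩) ∘
      (fun ω => ((fun i : Fin s => u (i.1 + 1) ω), (fun i : Fin r => v (i.1 + 1) ω))) := by
    funext ω
    show u i ω = u (i - 1 + 1) ω
    rw [Nat.sub_add_cancel h1]
  rw [heq]
  exact ((measurable_pi_apply _).comp measurable_fst).comp (measurable_hist2_proj u v s r)

lemma measurable_v_hist {i : ℕ} (h1 : 1 ≤ i) (h2 : i ≤ r) :
    @Measurable Ω _ (hist2 u v s r) _ (v i) := by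
  have hlt : i - 1 < r := by omega
  have heq : v i = (fun p : (Fin s → ℕ) × (Fin r → ℕ) => p.2 ⟨i - 1, hlt⟩) ∘
      (fun ω => ((fun i : Fin s => u (i.1 + 1) ω), (fun i : Fin r => v (i.1 + 1) ω))) := by
    funext ω
    show v i ω = v (i - 1 + 1) ω
    rw [Nat.sub_add_cancel h1]
  rw [heq]
  exact ((measurable_pi_apply _).comp measurable_snd).comp (measurable_hist2_proj u v s r)

lemma measurable_cntA_hist (k t : ℕ) (ht : t ≤ s + 1) :
    @Measurable Ω _ (hist2 u v s r) _ (cntA u k t) := by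
  have : cntA u k t = fun ω => ∑ i ∈ Finset.Ico 1 t, if u i ω = k then 1 else 0 := by
    funext ω; exact Finset.card_filter _ _
  rw [this]
  apply Finset.measurable_sum
  intro i hi
  rw [Finset.mem_Ico] at hi
  have hu : @Measurable Ω _ (hist2 u v s r) _ (u i) :=
    measurable_u_hist u v s r hi.1 (by omega)
  exact Measurable.comp (f := u i)
    (measurable_from_top (f := fun x : ℕ => if x = k then 1 else 0)) hu

lemma measurable_cntB_hist (k t : ℕ) (ht : t ≤ s + 1) (ht' : t ≤ r + 1) :
    @Measurable Ω _ (hist2 u v s r) _ (cntB u v k t) := by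
  have : cntB u v k t = fun ω =>
      ∑ i ∈ Finset.Ico 1 t, (if u i ω = k then 1 else 0) * (if v i ω = 1 then 1 else 0) := by
    funext ω
    rw [cntB, Finset.card_filter]
    apply Finset.sum_congr rfl
    intro i _
    by_cases h1 : u i ω = k <;> by_cases h2 : v i ω = 1 <;> simp [h1, h2]
  rw [this]
  apply Finset.measurable_sum
  intro i hi
  rw [Finset.mem_Ico] at hi
  have hu : @Measurable Ω _ (hist2 u v s r) _ (u i) :=
    measurable_u_hist u v s r hi.1 (by omega)
  have hv : @Measurable Ω _ (hist2 u v s r) _ (v i) :=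
    measurable_v_hist u v s r hi.1 (by omega)
  exact Measurable.mul
    (Measurable.comp (f := u i)
      (measurable_from_top (f := fun x : ℕ => if x = k then 1 else 0)) hu)
    (Measurable.comp (f := v i)
      (measurable_from_top (f := fun x : ℕ => if x = 1 then 1 else 0)) hv)

end meas

lemma measurable_fFun (c : ℝ) : Measurable (fFun c) := by
  unfold fFun
  refine Measurable.ite (measurableSet_le measurable_id measurable_const)
    (measurable_id.pow_const 2)
    (Measurable.ite (measurableSet_lt measurable_id measurable_const) measurable_const
      ((measurable_id.sub measurable_const).pow_const 2))

/-! ### One-step recursions and size bounds for the counters -/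

lemma cntA_succ {Ω : Type*} (u : ℕ → Ω → ℕ) (k t : ℕ) (ht : 1 ≤ t) (ω : Ω) :
    cntA u k (t + 1) ω = cntA u k t ω + if u t ω = k then 1 else 0 := by
  unfold cntA
  rw [Nat.Ico_succ_right_eq_insert_Ico ht, Finset.filter_insert]
  by_cases h : u t ω = k
  · rw [if_pos h, if_pos h, Finset.card_insert_of_notMem (by simp)]
  · rw [if_neg h, if_neg h, Nat.add_zero]

lemma cntB_succ {Ω : Type*} (u v : ℕ → Ω → ℕ) (k t : ℕ) (ht : 1 ≤ t) (ω : Ω) :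
    cntB u v k (t + 1) ω = cntB u v k t ω + if u t ω = k ∧ v t ω = 1 then 1 else 0 := by
  unfold cntB
  rw [Nat.Ico_succ_right_eq_insert_Ico ht, Finset.filter_insert]
  by_cases h : u t ω = k ∧ v t ω = 1
  · rw [if_pos h, if_pos h, Finset.card_insert_of_notMem (by simp)]
  · rw [if_neg h, if_neg h, Nat.add_zero]

lemma cntA_le {Ω : Type*} (u : ℕ → Ω → ℕ) (k t : ℕ) (ω : Ω) : cntA u k t ω ≤ t - 1 := by
  have := Finset.card_filter_le (Finset.Ico 1 t) (fun i => u i ω = k)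
  simpa [cntA] using this

lemma cntB_le {Ω : Type*} (u v : ℕ → Ω → ℕ) (k t : ℕ) (ω : Ω) : cntB u v k t ω ≤ t - 1 := by
  have := Finset.card_filter_le (Finset.Ico 1 t) (fun i => u i ω = k ∧ v i ω = 1)
  simpa [cntB] using this
lemma Xproc_abs_le {Ω : Type*} (m n : ℕ) (g z : ℕ → Ω → ℕ) (k u : ℕ) (ω : Ω)
    (hn : 0 < n) :
    |Xproc m n g z k u ω| ≤ ((u : ℝ) + (Yval m n : ℝ) / n) ^ 2 + 6 * u := by
  have hnR : (1 : ℝ) ≤ n := by exact_mod_cast hn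
  have haN : cntA g k u ω ≤ u := le_trans (cntA_le g k u ω) (Nat.sub_le u 1)
  have hcN : cntB g z k u ω ≤ u := le_trans (cntB_le g z k u ω) (Nat.sub_le u 1)
  have ha : (cntA g k u ω : ℝ) ≤ u := by exact_mod_cast haN
  have hc : (cntB g z k u ω : ℝ) ≤ u := by exact_mod_cast hcN
  have ha0 : (0 : ℝ) ≤ (cntA g k u ω : ℝ) := Nat.cast_nonneg _
  have hc0 : (0 : ℝ) ≤ (cntB g z k u ω : ℝ) := Nat.cast_nonneg _
  have hb0 : (0 : ℝ) ≤ (Yval m n : ℝ) / n := by positivity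
  have hdiv : (cntA g k u ω : ℝ) / n ≤ (cntA g k u ω : ℝ) := div_le_self ha0 hnR
  have hdiv0 : (0 : ℝ) ≤ (cntA g k u ω : ℝ) / n := by positivity
  have hx : |(cntB g z k u ω : ℝ) - (cntA g k u ω : ℝ) / n| ≤ u := by
    rw [abs_le]
    constructor <;> nlinarith
  have hfle := fFun_abs_le hb0 hx
  have hfnn := fFun_nonneg (b := (Yval m n : ℝ) / n)
      ((cntB g z k u ω : ℝ) - (cntA g k u ω : ℝ) / n)
  have hn0 : (0 : ℝ) < n := by exact_mod_cast hn
  have h3 : 3 * (cntA g k u ω : ℝ) / n ≤ 3 * u := by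
    rw [div_le_iff₀ hn0]; nlinarith
  have h30 : 0 ≤ 3 * (cntA g k u ω : ℝ) / n := by positivity
  unfold Xproc
  rw [abs_le]
  constructor <;> nlinarith [sq_nonneg ((u : ℝ) + (Yval m n : ℝ) / n)]
set_option maxHeartbeats 2000000 in
/-- for each `1 ≤ k ≤ n`, the process `X_{k,1}, …, X_{k,mn+1}` is a
supermartingale: for each `1 ≤ t ≤ mn`, almost surely
`E(X_{k,t+1} | g_1,…,g_t, z_1,…,z_{t−1}) ≤ X_{k,t}`. -/
theorem Xproc_supermartingale
    {Ω : Type*} [MeasurableSpace Ω] (μ : Measure Ω) [IsProbabilityMeasure μ]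
    (m n : ℕ) (hm : 0 < m) (hn : 0 < n)
    (hmn : (1200 : ℝ) * Real.sqrt m ≤ n)
    (D g y z : ℕ → Ω → ℕ)
    (hDmeas : ∀ t, Measurable (D t))
    (hgmeas : ∀ t, Measurable (g t))
    (hymeas : ∀ t, Measurable (y t))
    (hzmeas : ∀ t, Measurable (z t))
    (hDvalid : ∀ᵐ ω ∂μ, ValidDeck m n (fun t => D t ω))
    (hDunif : ∀ d₁ d₂ : ℕ → ℕ, ValidDeck m n d₁ → ValidDeck m n d₂ →
      μ {ω | ∀ t ∈ Finset.Icc 1 (m * n), D t ω = d₁ t} =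
        μ {ω | ∀ t ∈ Finset.Icc 1 (m * n), D t ω = d₂ t})
    (S : List ℕ → ℕ) (hS : ∀ l, S l ∈ Finset.Icc 1 n)
    (hg : ∀ t ∈ Finset.Icc 1 (m * n), ∀ ω,
      g t ω = S (List.ofFn fun i : Fin (t - 1) => y (i.1 + 1) ω))
    (hy : ∀ t ∈ Finset.Icc 1 (m * n), ∀ ω,
      y t ω = if g t ω = D t ω then 1 else 0)
    -- `z` is a `{0,1}`-valued vector
    (hz01 : ∀ t ∈ Finset.Icc 1 (m * n), ∀ ω, z t ω = 0 ∨ z t ω = 1)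
    -- property (a)
    (ha : ∀ᵐ ω ∂μ, ∀ k ∈ Finset.Icc 1 n, ∀ t ∈ Finset.Icc 1 (m * n + 1),
      (m : ℝ) - max ((m * n : ℝ) - (cntA g k t ω : ℝ) - (Yval m n : ℝ)) 0
          ≤ (cntB g z k t ω : ℝ) ∧
        (cntB g z k t ω : ℝ) ≤ (m : ℝ))
    -- property (c)
    (hc : ∀ t ∈ Finset.Icc 1 (m * n), ∀ᵐ ω ∂μ,
      ((cntA g (g t ω) t ω : ℝ) < (m * n : ℝ) - (Yval m n : ℝ)) →
        (μ[(fun ω' => (z t ω' : ℝ)) | hist2 g z t (t - 1)]) ω =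
          ((m : ℝ) - (cntB g z (g t ω) t ω : ℝ)) /
            ((m * n : ℝ) - (cntA g (g t ω) t ω : ℝ) - (Yval m n : ℝ))) :
    ∀ k ∈ Finset.Icc 1 n, ∀ t ∈ Finset.Icc 1 (m * n), ∀ᵐ ω ∂μ,
      (μ[(fun ω' => Xproc m n g z k (t + 1) ω') | hist2 g z t (t - 1)]) ω
        ≤ Xproc m n g z k t ω := by
  intro k hk t ht
  rw [Finset.mem_Icc] at hk ht
  obtain ⟨hk1, hkn⟩ := hk
  obtain ⟨ht1, htmn⟩ := ht
  have htmem : t ∈ Finset.Icc 1 (m * n) := Finset.mem_Icc.mpr ⟨ht1, htmn⟩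
  have hkmem : k ∈ Finset.Icc 1 n := Finset.mem_Icc.mpr ⟨hk1, hkn⟩
  have htmem1 : t ∈ Finset.Icc 1 (m * n + 1) := Finset.mem_Icc.mpr ⟨ht1, by omega⟩
  have htmem1' : t + 1 ∈ Finset.Icc 1 (m * n + 1) := Finset.mem_Icc.mpr ⟨by omega, by omega⟩
  have hnR0 : (0 : ℝ) < n := by exact_mod_cast hn
  have hnR1 : (1 : ℝ) ≤ n := by exact_mod_cast hn
  have hb0 : (0 : ℝ) ≤ (Yval m n : ℝ) / n := by positivity
  -- the history σ-algebra is a sub-σ-algebra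
  have hπ : Measurable (fun ω : Ω => ((fun i : Fin t => g (i.1 + 1) ω),
      (fun i : Fin (t - 1) => z (i.1 + 1) ω))) :=
    Measurable.prodMk (measurable_pi_lambda _ fun i => hgmeas _)
      (measurable_pi_lambda _ fun i => hzmeas _)
  have hFle : hist2 g z t (t - 1) ≤ ‹MeasurableSpace Ω› := measurable_iff_comap_le.mp hπ
  haveI : IsFiniteMeasure (μ.trim hFle) := isFiniteMeasure_trim hFle
  -- measurability w.r.t. the history σ-algebra
  have hgtF : @Measurable Ω _ (hist2 g z t (t - 1)) _ (g t) :=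
    measurable_u_hist g z t (t - 1) ht1 le_rfl
  have haF : @Measurable Ω _ (hist2 g z t (t - 1)) _ (cntA g k t) :=
    measurable_cntA_hist g z t (t - 1) k t (Nat.le_succ t)
  have hcF : @Measurable Ω _ (hist2 g z t (t - 1)) _ (cntB g z k t) :=
    measurable_cntB_hist g z t (t - 1) k t (Nat.le_succ t) (by omega)
  have haFR : @Measurable Ω _ (hist2 g z t (t - 1)) _ (fun ω => (cntA g k t ω : ℝ)) :=
    Measurable.comp (f := cntA g k t) (measurable_from_top (f := fun x : ℕ => (x : ℝ))) haF
  have hcFR : @Measurable Ω _ (hist2 g z t (t - 1)) _ (fun ω => (cntB g z k t ω : ℝ)) :=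
    Measurable.comp (f := cntB g z k t) (measurable_from_top (f := fun x : ℕ => (x : ℝ))) hcF
  have hXtF : @Measurable Ω _ (hist2 g z t (t - 1)) _ (Xproc m n g z k t) := by
    unfold Xproc
    exact (((measurable_fFun _).comp (hcFR.sub (haFR.div_const _))).sub
      (hcFR.const_mul 3)).sub ((haFR.const_mul 3).div_const _)
  -- ambient measurability of the counters at time `t+1`
  have hπ2 : Measurable (fun ω : Ω => ((fun i : Fin (t + 1) => g (i.1 + 1) ω),
      (fun i : Fin t => z (i.1 + 1) ω))) :=
    Measurable.prodMk (measurable_pi_lambda _ fun i => hgmeas _)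
      (measurable_pi_lambda _ fun i => hzmeas _)
  have hF2le : hist2 g z (t + 1) t ≤ ‹MeasurableSpace Ω› := measurable_iff_comap_le.mp hπ2
  have haF2 : Measurable (fun ω => (cntA g k (t + 1) ω : ℝ)) :=
    (Measurable.comp (f := cntA g k (t + 1)) (measurable_from_top (f := fun x : ℕ => (x : ℝ)))
      (measurable_cntA_hist g z (t + 1) t k (t + 1) (Nat.le_succ _))).mono hF2le le_rfl
  have hcF2 : Measurable (fun ω => (cntB g z k (t + 1) ω : ℝ)) :=
    (Measurable.comp (f := cntB g z k (t + 1)) (measurable_from_top (f := fun x : ℕ => (x : ℝ)))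
      (measurable_cntB_hist g z (t + 1) t k (t + 1) (Nat.le_succ _) le_rfl)).mono
      hF2le le_rfl
  have hXt1meas : Measurable (Xproc m n g z k (t + 1)) := by
    unfold Xproc
    exact (((measurable_fFun _).comp (hcF2.sub (haF2.div_const _))).sub
      (hcF2.const_mul 3)).sub ((haF2.const_mul 3).div_const _)
  -- the increment decomposition
  set W : Ω → ℝ := fun ω => if g t ω = k then
      (fFun ((Yval m n : ℝ) / n) ((cntB g z k t ω : ℝ) + 1 - ((cntA g k t ω : ℝ) + 1) / n)
        - fFun ((Yval m n : ℝ) / n) ((cntB g z k t ω : ℝ) - ((cntA g k t ω : ℝ) + 1) / n) - 3)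
    else 0 with hWdef
  set V : Ω → ℝ := fun ω => if g t ω = k then
      (fFun ((Yval m n : ℝ) / n) ((cntB g z k t ω : ℝ) - ((cntA g k t ω : ℝ) + 1) / n)
        - fFun ((Yval m n : ℝ) / n) ((cntB g z k t ω : ℝ) - (cntA g k t ω : ℝ) / n)
        - 3 * (1 / (n : ℝ)))
    else 0 with hVdef
  have hdecomp : ∀ ω, Xproc m n g z k (t + 1) ω
      = Xproc m n g z k t ω + W ω * (z t ω : ℝ) + V ω := by
    intro ω
    have hA := cntA_succ g k t ht1 ω
    have hB := cntB_succ g z k t ht1 ω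
    by_cases hgk : g t ω = k
    · have e2 : ((cntA g k (t + 1) ω : ℕ) : ℝ) = (cntA g k t ω : ℝ) + 1 := by
        rw [hA, if_pos hgk]; push_cast; ring
      rcases hz01 t htmem ω with h0 | h1
      · have e1 : ((cntB g z k (t + 1) ω : ℕ) : ℝ) = (cntB g z k t ω : ℝ) := by
          rw [hB, if_neg (by simp [h0]), Nat.add_zero]
        simp only [Xproc, hWdef, hVdef, if_pos hgk, e1, e2, h0, Nat.cast_zero]
        ring
      · have e1 : ((cntB g z k (t + 1) ω : ℕ) : ℝ) = (cntB g z k t ω : ℝ) + 1 := by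
          rw [hB, if_pos ⟨hgk, h1⟩]; push_cast; ring
        simp only [Xproc, hWdef, hVdef, if_pos hgk, e1, e2, h1, Nat.cast_one]
        ring
    · have e2 : cntA g k (t + 1) ω = cntA g k t ω := by rw [hA, if_neg hgk, Nat.add_zero]
      have e1 : cntB g z k (t + 1) ω = cntB g z k t ω := by
        rw [hB, if_neg (by tauto), Nat.add_zero]
      simp only [Xproc, hWdef, hVdef, if_neg hgk, e1, e2]
      ring
  -- bounds and integrability
  have hzR_int : Integrable (fun ω' => (z t ω' : ℝ)) μ := by
    refine Integrable.mono' (integrable_const (1 : ℝ))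
      ((Measurable.comp (f := z t) (measurable_from_top (f := fun x : ℕ => (x : ℝ)))
        (hzmeas t)).aestronglyMeasurable) (ae_of_all _ fun ω => ?_)
    rcases hz01 t htmem ω with h | h <;> simp [h]
  have hXt_int : Integrable (Xproc m n g z k t) μ := by
    refine Integrable.mono' (integrable_const (((t : ℝ) + (Yval m n : ℝ) / n) ^ 2 + 6 * t))
      ((hXtF.mono hFle le_rfl).aestronglyMeasurable) (ae_of_all _ fun ω => ?_)
    simpa [Real.norm_eq_abs] using Xproc_abs_le m n g z k t ω hn
  have hXt1_int : Integrable (Xproc m n g z k (t + 1)) μ := by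
    refine Integrable.mono'
      (integrable_const ((((t : ℕ) + 1 : ℕ) + (Yval m n : ℝ) / n) ^ 2 + 6 * ((t : ℕ) + 1 : ℕ)))
      hXt1meas.aestronglyMeasurable (ae_of_all _ fun ω => ?_)
    simpa [Real.norm_eq_abs] using Xproc_abs_le m n g z k (t + 1) ω hn
  -- pointwise bounds on the three `fFun` values
  have hfbounds : ∀ ω, fFun ((Yval m n : ℝ) / n)
        ((cntB g z k t ω : ℝ) + 1 - ((cntA g k t ω : ℝ) + 1) / n)
          ≤ ((t : ℝ) + 2 + (Yval m n : ℝ) / n) ^ 2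
      ∧ fFun ((Yval m n : ℝ) / n) ((cntB g z k t ω : ℝ) - ((cntA g k t ω : ℝ) + 1) / n)
          ≤ ((t : ℝ) + 2 + (Yval m n : ℝ) / n) ^ 2
      ∧ fFun ((Yval m n : ℝ) / n) ((cntB g z k t ω : ℝ) - (cntA g k t ω : ℝ) / n)
          ≤ ((t : ℝ) + 2 + (Yval m n : ℝ) / n) ^ 2 := by
    intro ω
    have haN : cntA g k t ω ≤ t := le_trans (cntA_le g k t ω) (Nat.sub_le t 1)
    have hcN : cntB g z k t ω ≤ t := le_trans (cntB_le g z k t ω) (Nat.sub_le t 1)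
    have ha' : (cntA g k t ω : ℝ) ≤ t := by exact_mod_cast haN
    have hc' : (cntB g z k t ω : ℝ) ≤ t := by exact_mod_cast hcN
    have ha0 : (0 : ℝ) ≤ (cntA g k t ω : ℝ) := Nat.cast_nonneg _
    have hc0 : (0 : ℝ) ≤ (cntB g z k t ω : ℝ) := Nat.cast_nonneg _
    have hd1 : ((cntA g k t ω : ℝ) + 1) / n ≤ (cntA g k t ω : ℝ) + 1 :=
      div_le_self (by positivity) hnR1
    have hd10 : (0 : ℝ) ≤ ((cntA g k t ω : ℝ) + 1) / n := by positivity
    have hd2 : (cntA g k t ω : ℝ) / n ≤ (cntA g k t ω : ℝ) := div_le_self ha0 hnR1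
    have hd20 : (0 : ℝ) ≤ (cntA g k t ω : ℝ) / n := by positivity
    refine ⟨fFun_abs_le hb0 (abs_le.mpr ⟨by linarith, by linarith⟩),
      fFun_abs_le hb0 (abs_le.mpr ⟨by linarith, by linarith⟩),
      fFun_abs_le hb0 (abs_le.mpr ⟨by linarith, by linarith⟩)⟩
  have hWbound : ∀ ω, |W ω| ≤ 2 * ((t : ℝ) + 2 + (Yval m n : ℝ) / n) ^ 2 + 3 := by
    intro ω
    obtain ⟨hf1, hf2, hf3⟩ := hfbounds ω
    have hnn1 := fFun_nonneg (b := (Yval m n : ℝ) / n)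
      ((cntB g z k t ω : ℝ) + 1 - ((cntA g k t ω : ℝ) + 1) / n)
    have hnn2 := fFun_nonneg (b := (Yval m n : ℝ) / n)
      ((cntB g z k t ω : ℝ) - ((cntA g k t ω : ℝ) + 1) / n)
    simp only [hWdef]
    by_cases hgk : g t ω = k
    · rw [if_pos hgk, abs_le]; constructor <;> linarith
    · rw [if_neg hgk]; simp
      nlinarith [sq_nonneg ((t : ℝ) + 2 + (Yval m n : ℝ) / n)]
  have hVbound : ∀ ω, |V ω| ≤ 2 * ((t : ℝ) + 2 + (Yval m n : ℝ) / n) ^ 2 + 3 := by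
    intro ω
    obtain ⟨hf1, hf2, hf3⟩ := hfbounds ω
    have hnn2 := fFun_nonneg (b := (Yval m n : ℝ) / n)
      ((cntB g z k t ω : ℝ) - ((cntA g k t ω : ℝ) + 1) / n)
    have hnn3 := fFun_nonneg (b := (Yval m n : ℝ) / n)
      ((cntB g z k t ω : ℝ) - (cntA g k t ω : ℝ) / n)
    have h1n0 : (0 : ℝ) < 1 / n := by positivity
    have h1n1 : (1 : ℝ) / n ≤ 1 := by rw [div_le_one hnR0]; linarith
    simp only [hVdef]
    by_cases hgk : g t ω = k
    · rw [if_pos hgk, abs_le]; constructor <;> linarith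
    · rw [if_neg hgk]; simp
      nlinarith [sq_nonneg ((t : ℝ) + 2 + (Yval m n : ℝ) / n)]
  -- measurability of `W` and `V` w.r.t. the history σ-algebra
  have hsetgk : MeasurableSet[hist2 g z t (t - 1)] {ω | g t ω = k} :=
    hgtF (measurableSet_singleton k)
  have hWF : @Measurable Ω _ (hist2 g z t (t - 1)) _ W := by
    simp only [hWdef]
    exact Measurable.ite hsetgk
      ((((measurable_fFun _).comp ((hcFR.add_const 1).sub ((haFR.add_const 1).div_const _))).sub
        ((measurable_fFun _).comp (hcFR.sub ((haFR.add_const 1).div_const _)))).sub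
        measurable_const) measurable_const
  have hVF : @Measurable Ω _ (hist2 g z t (t - 1)) _ V := by
    simp only [hVdef]
    exact Measurable.ite hsetgk
      ((((measurable_fFun _).comp (hcFR.sub ((haFR.add_const 1).div_const _))).sub
        ((measurable_fFun _).comp (hcFR.sub (haFR.div_const _)))).sub
        measurable_const) measurable_const
  have hV_int : Integrable V μ := by
    refine Integrable.mono' (integrable_const (2 * ((t : ℝ) + 2 + (Yval m n : ℝ) / n) ^ 2 + 3))
      ((hVF.mono hFle le_rfl).aestronglyMeasurable) (ae_of_all _ fun ω => ?_)
    simpa [Real.norm_eq_abs] using hVbound ω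
  have hWz_int : Integrable (W * fun ω' => (z t ω' : ℝ)) μ := by
    refine Integrable.mono' (integrable_const (2 * ((t : ℝ) + 2 + (Yval m n : ℝ) / n) ^ 2 + 3))
      (((hWF.mono hFle le_rfl).mul (Measurable.comp (f := z t)
        (measurable_from_top (f := fun x : ℕ => (x : ℝ))) (hzmeas t))).aestronglyMeasurable)
      (ae_of_all _ fun ω => ?_)
    have := hWbound ω
    have habs : (0 : ℝ) ≤ 2 * ((t : ℝ) + 2 + (Yval m n : ℝ) / n) ^ 2 + 3 := by positivity
    rw [Pi.mul_apply, Real.norm_eq_abs, abs_mul]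
    rcases hz01 t htmem ω with h | h
    · simp only [h, Nat.cast_zero, abs_zero, mul_zero]; exact habs
    · simpa [h] using this
  -- the conditional expectation computation
  have hsum : (fun ω' => Xproc m n g z k (t + 1) ω') =
      Xproc m n g z k t + ((W * fun ω' => (z t ω' : ℝ)) + V) := by
    funext ω; simp only [Pi.add_apply, Pi.mul_apply]; rw [hdecomp ω]; ring
  have step1 : μ[(fun ω' => Xproc m n g z k (t + 1) ω') | hist2 g z t (t - 1)] =ᵐ[μ]
      μ[Xproc m n g z k t | hist2 g z t (t - 1)]
        + (μ[(W * fun ω' => (z t ω' : ℝ)) | hist2 g z t (t - 1)]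
          + μ[V | hist2 g z t (t - 1)]) := by
    rw [hsum]
    exact (condExp_add hXt_int (hWz_int.add hV_int) (hist2 g z t (t - 1))).trans
      (Filter.EventuallyEq.add Filter.EventuallyEq.rfl (condExp_add hWz_int hV_int (hist2 g z t (t - 1))))
  have hXt_eq : μ[Xproc m n g z k t | hist2 g z t (t - 1)] = Xproc m n g z k t :=
    condExp_of_stronglyMeasurable hFle hXtF.stronglyMeasurable hXt_int
  have hV_eq : μ[V | hist2 g z t (t - 1)] = V :=
    condExp_of_stronglyMeasurable hFle hVF.stronglyMeasurable hV_int
  have hWmul : μ[(W * fun ω' => (z t ω' : ℝ)) | hist2 g z t (t - 1)] =ᵐ[μ]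
      W * μ[(fun ω' => (z t ω' : ℝ)) | hist2 g z t (t - 1)] :=
    condExp_mul_of_stronglyMeasurable_left hWF.stronglyMeasurable hWz_int hzR_int
  rw [hXt_eq, hV_eq] at step1
  have hP0 : 0 ≤ᵐ[μ] μ[(fun ω' => (z t ω' : ℝ)) | hist2 g z t (t - 1)] :=
    condExp_nonneg (ae_of_all _ fun ω => by positivity)
  -- on the event `A` (label `k` guessed but few draws remain) the conditional
  -- expectation of `z t` vanishes
  set A : Set Ω := {ω | g t ω = k ∧ (m * n : ℝ) - (Yval m n : ℝ) ≤ (cntA g k t ω : ℝ)}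
    with hAdef
  have hAm : MeasurableSet[hist2 g z t (t - 1)] A := by
    have h2 : MeasurableSet[hist2 g z t (t - 1)]
        {ω | (m * n : ℝ) - (Yval m n : ℝ) ≤ (cntA g k t ω : ℝ)} := haFR measurableSet_Ici
    exact hsetgk.inter h2
  have hindz0 : (A.indicator (fun _ => (1 : ℝ)) * fun ω' => (z t ω' : ℝ)) =ᵐ[μ] 0 := by
    filter_upwards [ha] with ω haω
    simp only [Pi.mul_apply, Pi.zero_apply]
    by_cases hmemA : ω ∈ A
    · rcases hz01 t htmem ω with h0 | h1
      · simp [h0]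
      · exfalso
        obtain ⟨hgk, hge⟩ := hmemA
        obtain ⟨hlow, hhigh⟩ := haω k hkmem t htmem1
        have hhigh1 := (haω k hkmem (t + 1) htmem1').2
        rw [max_eq_right (by linarith)] at hlow
        have hB := cntB_succ g z k t ht1 ω
        rw [hB, if_pos ⟨hgk, h1⟩] at hhigh1
        push_cast at hhigh1
        linarith
    · simp [Set.indicator_of_notMem hmemA]
  have hindz_int : Integrable (A.indicator (fun _ => (1 : ℝ)) * fun ω' => (z t ω' : ℝ)) μ := by
    refine Integrable.mono' (integrable_const (1 : ℝ))
      (((measurable_const.indicator (hFle _ hAm)).mul (Measurable.comp (f := z t)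
        (measurable_from_top (f := fun x : ℕ => (x : ℝ))) (hzmeas t))).aestronglyMeasurable)
      (ae_of_all _ fun ω => ?_)
    rw [Pi.mul_apply, Real.norm_eq_abs, abs_mul]
    rcases hz01 t htmem ω with h | h
    · simp [h]
    · rw [h]
      by_cases hmemA : ω ∈ A <;>
        simp [Set.indicator_of_mem, Set.indicator_of_notMem, hmemA]
  have hindP : (A.indicator (fun _ => (1 : ℝ))
      * μ[(fun ω' => (z t ω' : ℝ)) | hist2 g z t (t - 1)]) =ᵐ[μ] 0 := by
    have h1 := condExp_mul_of_stronglyMeasurable_left (μ := μ)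
      ((stronglyMeasurable_const (b := (1 : ℝ))).indicator hAm) hindz_int hzR_int
    have h2 : μ[(A.indicator (fun _ => (1 : ℝ)) * fun ω' => (z t ω' : ℝ))
        | hist2 g z t (t - 1)] =ᵐ[μ] μ[(0 : Ω → ℝ) | hist2 g z t (t - 1)] :=
      condExp_congr_ae hindz0
    rw [condExp_zero] at h2
    exact h1.symm.trans h2
  -- FINAL, pointwise verification
  filter_upwards [step1, hWmul, hP0, hindP, ha, hc t htmem] with ω e1 e2 hp0 hip haω hcω
  rw [e1]
  simp only [Pi.add_apply, Pi.mul_apply] at e2 ⊢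
  rw [e2]
  simp only [Pi.zero_apply] at hp0
  simp only [Pi.mul_apply, Pi.zero_apply] at hip
  set P : ℝ := (μ[(fun ω' => (z t ω' : ℝ)) | hist2 g z t (t - 1)]) ω with hPdef
  suffices hgoal : W ω * P + V ω ≤ 0 by linarith
  by_cases hgk : g t ω = k
  · by_cases hlt : (cntA g k t ω : ℝ) < (m * n : ℝ) - (Yval m n : ℝ)
    · -- main case: the conditional distribution of `z t` is known
      rw [hgk] at hcω
      have hPval : P = ((m : ℝ) - (cntB g z k t ω : ℝ))
          / ((m * n : ℝ) - (cntA g k t ω : ℝ) - (Yval m n : ℝ)) := hcω hlt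
      obtain ⟨hlow, hhigh⟩ := haω k hkmem t htmem1
      have hq : (0 : ℝ) < (m * n : ℝ) - (cntA g k t ω : ℝ) - (Yval m n : ℝ) := by linarith
      rw [max_eq_left (by linarith)] at hlow
      have hp1 : P ≤ 1 := by
        rw [hPval, div_le_one hq]; linarith
      have h1n0 : (0 : ℝ) < 1 / n := by positivity
      have h1n1 : (1 : ℝ) / n ≤ 1 := by rw [div_le_one hnR0]; linarith
      have hrel : P - 1 / n = ((Yval m n : ℝ) / n
            - ((cntB g z k t ω : ℝ) - (cntA g k t ω : ℝ) / n))
          / ((m * n : ℝ) - (cntA g k t ω : ℝ) - (Yval m n : ℝ)) := by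
        have hne1 : ((m * n : ℝ) - (cntA g k t ω : ℝ) - (Yval m n : ℝ)) ≠ 0 := ne_of_gt hq
        have hne2 : (n : ℝ) ≠ 0 := ne_of_gt hnR0
        rw [hPval]
        field_simp
        ring
      have hcore := core_ineq hb0 hq h1n0 h1n1 hp0 hp1 hrel
      rw [show (cntB g z k t ω : ℝ) - (cntA g k t ω : ℝ) / n + (1 - 1 / n)
            = (cntB g z k t ω : ℝ) + 1 - ((cntA g k t ω : ℝ) + 1) / n by ring,
          show (cntB g z k t ω : ℝ) - (cntA g k t ω : ℝ) / n + -(1 / n)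
            = (cntB g z k t ω : ℝ) - ((cntA g k t ω : ℝ) + 1) / n by ring] at hcore
      simp only [hWdef, hVdef, if_pos hgk]
      linarith [hcore]
    · -- degenerate case: `ω ∈ A`, so `P = 0` and the increment is negative
      have hmemA : ω ∈ A := ⟨hgk, not_lt.mp hlt⟩
      rw [Set.indicator_of_mem hmemA, one_mul] at hip
      rw [hip, mul_zero, zero_add]
      obtain ⟨hlow, hhigh⟩ := haω k hkmem t htmem1
      rw [max_eq_right (by linarith [not_lt.mp hlt])] at hlow
      have hceq : (cntB g z k t ω : ℝ) = m := le_antisymm hhigh (by linarith)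
      have haleN : cntA g k t ω + 1 ≤ m * n := by
        have := cntA_le g k t ω; omega
      have hale : (cntA g k t ω : ℝ) + 1 ≤ (m : ℝ) * n := by exact_mod_cast haleN
      have harg0 : (0 : ℝ) ≤ (m : ℝ) - ((cntA g k t ω : ℝ) + 1) / n := by
        rw [sub_nonneg, div_le_iff₀ hnR0]; linarith
      have hargb : (m : ℝ) - ((cntA g k t ω : ℝ) + 1) / n < (Yval m n : ℝ) / n := by
        have hge : (m : ℝ) * n - (Yval m n : ℝ) ≤ (cntA g k t ω : ℝ) := by
          have := not_lt.mp hlt; push_cast at this ⊢; linarith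
        have key : (m : ℝ) - ((cntA g k t ω : ℝ) + 1) / n - (Yval m n : ℝ) / n
            = ((m : ℝ) * n - (cntA g k t ω : ℝ) - (Yval m n : ℝ) - 1) / n := by
          field_simp
          ring
        have hneg : ((m : ℝ) * n - (cntA g k t ω : ℝ) - (Yval m n : ℝ) - 1) / n < 0 :=
          div_neg_of_neg_of_pos (by linarith) hnR0
        linarith
      have hcast : (m : ℝ) * n - (Yval m n : ℝ) ≤ (cntA g k t ω : ℝ) → True := fun _ => trivial
      simp only [hVdef, if_pos hgk]
      rw [hceq]
      have hsmall : fFun ((Yval m n : ℝ) / n) ((m : ℝ) - ((cntA g k t ω : ℝ) + 1) / n)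
          ≤ (1 / (n : ℝ)) ^ 2 :=
        fFun_small (by linarith [le_of_lt (by positivity : (0:ℝ) < 1 / n)]) hargb
      have hfnn := fFun_nonneg (b := (Yval m n : ℝ) / n) ((m : ℝ) - (cntA g k t ω : ℝ) / n)
      have h1n0 : (0 : ℝ) < 1 / n := by positivity
      have h1n1 : (1 : ℝ) / n ≤ 1 := by rw [div_le_one hnR0]; linarith
      nlinarith [hsmall, hfnn, h1n0, h1n1]
  · simp only [hWdef, hVdef, if_neg hgk]
    simp
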